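/- Let q be an odd prime, let a, ℓ ∈ (ℤ/qℤ)^n, and let V = {i ∈ [n] : a_i ≠ 0 and ℓ_i ≠ 0} with v = |V|. Then the number of pairs i < j with i, j ∈ V and ℓ_i·a_j + ℓ_j·a_i ≠ 0 in ℤ/qℤ is at least v(v−1)/2 − v²/4. -/

import Mathlib

open Finset

/-- A swap-closed, diagonal-free finset of pairs has twice as many elements as its
`p.1 < p.2` part. -/
private lemma two_mul_filter_lt {m : ℕ} (s : Finset (Fin m × Fin m))
    (hswap : ∀ p ∈ s, (p.2, p.1) ∈ s) (hdiag : ∀ p ∈ s, p.1 ≠ p.2) :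
    s.card = 2 * (s.filter (fun p => p.1 < p.2)).card := by
  classical
  have h1 : s.filter (fun p => p.1 < p.2) ∪ s.filter (fun p => p.2 < p.1) = s := by
    ext p
    simp only [Finset.mem_union, Finset.mem_filter]
    constructor
    · rintro (⟨h, _⟩ | ⟨h, _⟩) <;> exact h
    · intro h
      rcases lt_or_gt_of_ne (hdiag p h) with h' | h'
      · exact Or.inl ⟨h, h'⟩
      · exact Or.inr ⟨h, h'⟩
  have h2 : Disjoint (s.filter (fun p => p.1 < p.2)) (s.filter (fun p => p.2 < p.1)) := by
    rw [Finset.disjoint_left]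
    intro p hp hq
    rw [Finset.mem_filter] at hp hq
    exact absurd hq.2 (lt_asymm hp.2)
  have h3 : (s.filter (fun p => p.2 < p.1)).card = (s.filter (fun p => p.1 < p.2)).card := by
    apply Finset.card_nbij' (fun p => (p.2, p.1)) (fun p => (p.2, p.1))
    · intro p hp
      rw [Finset.mem_coe, Finset.mem_filter] at hp ⊢
      exact ⟨hswap p hp.1, hp.2⟩
    · intro p hp
      rw [Finset.mem_coe, Finset.mem_filter] at hp ⊢
      exact ⟨hswap p hp.1, hp.2⟩
    · intro p _
      rfl
    · intro p _
      rfl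
  calc s.card = (s.filter (fun p => p.1 < p.2) ∪ s.filter (fun p => p.2 < p.1)).card := by
        rw [h1]
    _ = (s.filter (fun p => p.1 < p.2)).card + (s.filter (fun p => p.2 < p.1)).card :=
        Finset.card_union_of_disjoint h2
    _ = 2 * (s.filter (fun p => p.1 < p.2)).card := by rw [h3]; ring

/-- For an odd prime `q` and vectors `a, ℓ ∈ (ℤ/qℤ)^n`, letting
`V = {i : a_i ≠ 0 ∧ ℓ_i ≠ 0}` of size `v`, the number of pairs `i < j` in `V`
with `ℓ_i a_j + ℓ_j a_i ≠ 0` is at least `v(v-1)/2 - v²/4`. -/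
theorem mantel_pairs (n q : ℕ) (hq : q.Prime) (hq2 : q ≠ 2)
    (a ℓ : Fin n → ZMod q) :
    ((Finset.univ.filter (fun i => a i ≠ 0 ∧ ℓ i ≠ 0)).card : ℝ)
        * (((Finset.univ.filter (fun i => a i ≠ 0 ∧ ℓ i ≠ 0)).card : ℝ) - 1) / 2
      - ((Finset.univ.filter (fun i => a i ≠ 0 ∧ ℓ i ≠ 0)).card : ℝ) ^ 2 / 4
    ≤ ((Finset.univ.filter (fun p : Fin n × Fin n =>
          p.1 < p.2 ∧ (a p.1 ≠ 0 ∧ ℓ p.1 ≠ 0) ∧ (a p.2 ≠ 0 ∧ ℓ p.2 ≠ 0) ∧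
            ℓ p.1 * a p.2 + ℓ p.2 * a p.1 ≠ 0)).card : ℝ) := by
  classical
  haveI : Fact q.Prime := ⟨hq⟩
  haveI : NeZero q := ⟨hq.pos.ne'⟩
  set Vf : Finset (Fin n) := Finset.univ.filter (fun i => a i ≠ 0 ∧ ℓ i ≠ 0) with hVf
  set v := Vf.card with hv
  -- 2 is invertible
  have h2 : (2 : ZMod q) ≠ 0 := by
    intro h
    have : ((2 : ℕ) : ZMod q) = 0 := by exact_mod_cast h
    rw [ZMod.natCast_eq_zero_iff] at this
    rcases (Nat.Prime.eq_one_or_self_of_dvd Nat.prime_two q this) with h' | h'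
    · exact hq.one_lt.ne' h'
    · exact hq2 h'
  set r : Fin n → ZMod q := fun i => a i * (ℓ i)⁻¹ with hrdef
  have hmemV : ∀ i : Fin n, i ∈ Vf ↔ (a i ≠ 0 ∧ ℓ i ≠ 0) := by
    intro i
    rw [hVf, Finset.mem_filter]
    simp
  have hrne : ∀ i ∈ Vf, r i ≠ 0 := by
    intro i hi
    rw [hVf, Finset.mem_filter] at hi
    exact mul_ne_zero hi.2.1 (inv_ne_zero hi.2.2)
  -- equivalence of the bilinear condition with r i + r j = 0
  have heq : ∀ i j : Fin n, ℓ i ≠ 0 → ℓ j ≠ 0 →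
      (ℓ i * a j + ℓ j * a i = 0 ↔ r i + r j = 0) := by
    intro i j hi hj
    have key : ℓ i * a j + ℓ j * a i = (r i + r j) * (ℓ i * ℓ j) := by
      simp only [hrdef]
      field_simp
      ring
    constructor
    · intro h
      rw [key] at h
      rcases mul_eq_zero.mp h with h' | h'
      · exact h'
      · exact absurd h' (mul_ne_zero hi hj)
    · intro h
      rw [key, h, zero_mul]
  -- the sets of pairs
  set T : Finset (Fin n × Fin n) := (Vf ×ˢ Vf).filter (fun p => r p.1 + r p.2 = 0) with hT
  set S : Finset (Fin n × Fin n) := (Vf ×ˢ Vf).filter (fun p => r p.1 = r p.2) with hS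
  -- fiber counts
  set x : ZMod q → ℕ := fun c => (Vf.filter (fun i => r i = c)).card with hx
  -- T.card = ∑ x c * x (-c)
  have hTcard : T.card = ∑ c : ZMod q, x c * x (-c) := by
    rw [Finset.card_eq_sum_card_fiberwise (f := fun p : Fin n × Fin n => r p.1)
      (t := Finset.univ) (fun p _ => Finset.mem_univ _)]
    apply Finset.sum_congr rfl
    intro c _
    have : T.filter (fun p => r p.1 = c)
        = (Vf.filter (fun i => r i = c)) ×ˢ (Vf.filter (fun i => r i = -c)) := by
      ext p
      simp only [hT, Finset.mem_filter, Finset.mem_product]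
      constructor
      · rintro ⟨⟨⟨h1, h2'⟩, h3⟩, h4⟩
        refine ⟨⟨h1, h4⟩, h2', ?_⟩
        rw [h4] at h3
        linear_combination h3
      · rintro ⟨⟨h1, h4⟩, h2', h3⟩
        refine ⟨⟨⟨h1, h2'⟩, ?_⟩, h4⟩
        rw [h4, h3]
        ring
    rw [this, Finset.card_product]
  -- S.card = ∑ x c * x c
  have hScard : S.card = ∑ c : ZMod q, x c * x c := by
    rw [Finset.card_eq_sum_card_fiberwise (f := fun p : Fin n × Fin n => r p.1)
      (t := Finset.univ) (fun p _ => Finset.mem_univ _)]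
    apply Finset.sum_congr rfl
    intro c _
    have : S.filter (fun p => r p.1 = c)
        = (Vf.filter (fun i => r i = c)) ×ˢ (Vf.filter (fun i => r i = c)) := by
      ext p
      simp only [hS, Finset.mem_filter, Finset.mem_product]
      constructor
      · rintro ⟨⟨⟨h1, h2'⟩, h3⟩, h4⟩
        exact ⟨⟨h1, h4⟩, h2', h4 ▸ h3.symm⟩
      · rintro ⟨⟨h1, h4⟩, h2', h3⟩
        exact ⟨⟨⟨h1, h2'⟩, h4.trans h3.symm⟩, h4⟩
    rw [this, Finset.card_product]
  -- AM-GM termwise : T.card ≤ S.card (in ℝ)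
  have hTleS : (T.card : ℝ) ≤ (S.card : ℝ) := by
    rw [hTcard, hScard]
    push_cast
    have hsq : ∑ c : ZMod q, (x (-c) : ℝ) * (x (-c) : ℝ)
        = ∑ c : ZMod q, (x c : ℝ) * (x c : ℝ) := by
      apply Finset.sum_nbij' (fun c => -c) (fun c => -c) <;>
        intro c _ <;> simp
    have : ∑ c : ZMod q, (x c : ℝ) * (x (-c) : ℝ)
        ≤ ∑ c : ZMod q, ((x c : ℝ) * (x c : ℝ) + (x (-c) : ℝ) * (x (-c) : ℝ)) / 2 := by
      apply Finset.sum_le_sum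
      intro c _
      nlinarith [sq_nonneg ((x c : ℝ) - (x (-c) : ℝ))]
    calc ∑ c : ZMod q, (x c : ℝ) * (x (-c) : ℝ)
        ≤ ∑ c : ZMod q, ((x c : ℝ) * (x c : ℝ) + (x (-c) : ℝ) * (x (-c) : ℝ)) / 2 := this
      _ = ∑ c : ZMod q, (x c : ℝ) * (x c : ℝ) := by
          rw [← Finset.sum_div, Finset.sum_add_distrib, hsq]
          ring
  -- T and S are disjoint
  have hdisj : Disjoint T S := by
    rw [Finset.disjoint_left]
    intro p hp hq'
    rw [hT, Finset.mem_filter] at hp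
    rw [hS, Finset.mem_filter] at hq'
    have hmem := hp.1
    rw [Finset.mem_product] at hmem
    have : (2 : ZMod q) * r p.2 = 0 := by
      have := hp.2
      rw [hq'.2] at this
      linear_combination this
    rcases mul_eq_zero.mp this with h' | h'
    · exact h2 h'
    · exact hrne p.2 hmem.2 h'
  have hTS : T.card + S.card ≤ v * v := by
    calc T.card + S.card = (T ∪ S).card := (Finset.card_union_of_disjoint hdisj).symm
      _ ≤ (Vf ×ˢ Vf).card := by
          apply Finset.card_le_card
          intro p hp
          rcases Finset.mem_union.mp hp with h' | h'
          · exact (Finset.mem_filter.mp h').1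
          · exact (Finset.mem_filter.mp h').1
      _ = v * v := by rw [Finset.card_product]
  -- T is swap closed and diagonal-free
  have hTswap : ∀ p ∈ T, (p.2, p.1) ∈ T := by
    intro p hp
    rw [hT, Finset.mem_filter, Finset.mem_product] at hp ⊢
    exact ⟨⟨hp.1.2, hp.1.1⟩, by rw [← hp.2]; ring⟩
  have hTdiag : ∀ p ∈ T, p.1 ≠ p.2 := by
    intro p hp hpe
    rw [hT, Finset.mem_filter, Finset.mem_product] at hp
    have : (2 : ZMod q) * r p.2 = 0 := by
      have := hp.2
      rw [hpe] at this
      linear_combination this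
    rcases mul_eq_zero.mp this with h' | h'
    · exact h2 h'
    · exact hrne p.2 hp.1.2 h'
  -- bad pairs
  set Bad : Finset (Fin n × Fin n) := Finset.univ.filter (fun p =>
      p.1 < p.2 ∧ (a p.1 ≠ 0 ∧ ℓ p.1 ≠ 0) ∧ (a p.2 ≠ 0 ∧ ℓ p.2 ≠ 0) ∧
        ℓ p.1 * a p.2 + ℓ p.2 * a p.1 = 0) with hBad
  have hTltBad : T.filter (fun p => p.1 < p.2) = Bad := by
    ext p
    simp only [hT, hBad, Finset.mem_filter, Finset.mem_product, Finset.mem_univ, true_and]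
    rw [hmemV p.1, hmemV p.2]
    constructor
    · rintro ⟨⟨⟨h1, h2'⟩, h3⟩, h4⟩
      exact ⟨h4, h1, h2', (heq p.1 p.2 h1.2 h2'.2).mpr h3⟩
    · rintro ⟨h4, h1, h2', h3⟩
      exact ⟨⟨⟨h1, h2'⟩, (heq p.1 p.2 h1.2 h2'.2).mp h3⟩, h4⟩
  have hT2 : T.card = 2 * Bad.card := by
    rw [← hTltBad]; exact two_mul_filter_lt T hTswap hTdiag
  -- all pairs and good pairs
  set P : Finset (Fin n × Fin n) := Finset.univ.filter (fun p =>
      p.1 < p.2 ∧ (a p.1 ≠ 0 ∧ ℓ p.1 ≠ 0) ∧ (a p.2 ≠ 0 ∧ ℓ p.2 ≠ 0)) with hP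
  set Good : Finset (Fin n × Fin n) := Finset.univ.filter (fun p : Fin n × Fin n =>
      p.1 < p.2 ∧ (a p.1 ≠ 0 ∧ ℓ p.1 ≠ 0) ∧ (a p.2 ≠ 0 ∧ ℓ p.2 ≠ 0) ∧
        ℓ p.1 * a p.2 + ℓ p.2 * a p.1 ≠ 0) with hGood
  -- Good ∪ Bad = P, disjoint
  have hGB : Good.card + Bad.card = P.card := by
    have hg : Good = P.filter (fun p => ℓ p.1 * a p.2 + ℓ p.2 * a p.1 ≠ 0) := by
      rw [hGood, hP, Finset.filter_filter]
      apply Finset.filter_congr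
      intro p _
      tauto
    have hb : Bad = P.filter (fun p => ¬ (ℓ p.1 * a p.2 + ℓ p.2 * a p.1 ≠ 0)) := by
      rw [hBad, hP, Finset.filter_filter]
      apply Finset.filter_congr
      intro p _
      tauto
    rw [hg, hb]
    exact Finset.card_filter_add_card_filter_not _
  -- P counts pairs of offDiag
  have hoffP : Vf.offDiag.filter (fun p => p.1 < p.2) = P := by
    ext p
    simp only [hP, Finset.mem_filter, Finset.mem_offDiag, Finset.mem_univ, true_and]
    rw [hmemV p.1, hmemV p.2]
    constructor
    · rintro ⟨⟨h1, h2', _⟩, h4⟩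
      exact ⟨h4, h1, h2'⟩
    · rintro ⟨h4, h1, h2'⟩
      exact ⟨⟨h1, h2', ne_of_lt h4⟩, h4⟩
  have hoff2 : Vf.offDiag.card = 2 * P.card := by
    rw [← hoffP]
    apply two_mul_filter_lt
    · intro p hp
      rw [Finset.mem_offDiag] at hp ⊢
      exact ⟨hp.2.1, hp.1, (Ne.symm hp.2.2)⟩
    · intro p hp
      exact (Finset.mem_offDiag.mp hp).2.2
  have hoffcard : Vf.offDiag.card = v * v - v := by
    rw [hv]
    exact Finset.offDiag_card (s := Vf)
  have hvle : v ≤ v * v := by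
    rcases Nat.eq_zero_or_pos v with h | h
    · simp [h]
    · calc v = 1 * v := (one_mul v).symm
        _ ≤ v * v := Nat.mul_le_mul_right v h
  -- final arithmetic over ℝ
  have e1 : 2 * (P.card : ℝ) + v = v * v := by
    have : 2 * P.card + v = v * v := by omega
    exact_mod_cast congrArg (Nat.cast : ℕ → ℝ) this
  have e2 : (Good.card : ℝ) + Bad.card = P.card := by exact_mod_cast hGB
  have e3 : (T.card : ℝ) = 2 * Bad.card := by exact_mod_cast hT2
  have e4 : (T.card : ℝ) + S.card ≤ v * v := by exact_mod_cast hTS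
  show (v : ℝ) * ((v : ℝ) - 1) / 2 - (v : ℝ) ^ 2 / 4 ≤ (Good.card : ℝ)
  nlinarith [hTleS]
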